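/- Let p be a prime, let χ be a non-principal Dirichlet character mod p, and let f : [0,1] → ℝ be a function with Fourier coefficients (a_n)_{n∈ℤ} such that f(x) = ∑_{n=-∞}^{∞} a_n e^{2πinx} pointwise for all x ∈ (0,1), with S(f) = ∑_{n≠0} |a_n| convergent. Then |∑_{k=1}^{p-1} χ(k) f(k/p)| ≤ S(f) √p. -/

import Mathlib

open ZMod AddChar Finset Complex

lemma conj_gaussSum' (p : ℕ) [NeZero p] (χ : DirichletCharacter ℂ p) :
    (starRingEnd ℂ) (gaussSum χ (ZMod.stdAddChar (N := p)))
      = gaussSum χ⁻¹ (ZMod.stdAddChar (N := p))⁻¹ := by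
  rw [gaussSum, gaussSum, map_sum]
  refine Finset.sum_congr rfl fun x _ => ?_
  rw [map_mul]
  congr 1
  · by_cases hx : IsUnit x
    · have h1 : ‖χ x‖ = 1 := χ.unit_norm_eq_one hx.unit
      rw [MulChar.inv_apply_eq_inv, Ring.inverse_eq_inv', ← Complex.inv_eq_conj h1]
    · rw [χ.map_nonunit hx, (χ⁻¹).map_nonunit hx, map_zero]
  · have h1 : ‖ZMod.stdAddChar (N := p) x‖ = 1 := by
      rw [ZMod.stdAddChar_apply]; exact Circle.norm_coe _
    rw [AddChar.inv_apply, ← Complex.inv_eq_conj h1]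
    have h2 : ZMod.stdAddChar (N := p) (-x) * ZMod.stdAddChar (N := p) x = 1 := by
      rw [← AddChar.map_add_eq_mul]; simp
    exact (eq_inv_of_mul_eq_one_left h2).symm

lemma abs_gaussSum_eq' (p : ℕ) [NeZero p] [Fact p.Prime] (χ : DirichletCharacter ℂ p)
    (hχ : χ ≠ 1) :
    ‖gaussSum χ (ZMod.stdAddChar (N := p))‖ = Real.sqrt p := by
  have hmul := gaussSum_mul_gaussSum_eq_card (R := ZMod p) hχ (ZMod.isPrimitive_stdAddChar p)
  rw [← conj_gaussSum', Complex.mul_conj, ZMod.card] at hmul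
  have : Complex.normSq (gaussSum χ (ZMod.stdAddChar (N := p))) = p := by exact_mod_cast hmul
  rw [Complex.norm_def, this]

lemma sum_Icc_eq_sum_zmod' (p : ℕ) [NeZero p] (b : ZMod p → ℂ) (hb : b 0 = 0) :
    ∑ k ∈ Finset.Icc 1 (p - 1), b ((k : ℕ) : ZMod p) = ∑ x : ZMod p, b x := by
  have hrange : Finset.range p = insert 0 (Finset.Icc 1 (p - 1)) := by
    have hp : 0 < p := Nat.pos_of_ne_zero (NeZero.ne p)
    ext k; simp only [Finset.mem_range, Finset.mem_insert, Finset.mem_Icc]; omega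
  have h1 : ∑ k ∈ Finset.range p, b ((k : ℕ) : ZMod p) = ∑ x : ZMod p, b x := by
    refine Finset.sum_nbij' (fun k => ((k : ℕ) : ZMod p)) (fun x => x.val) ?_ ?_ ?_ ?_ ?_
    · intro k _; exact Finset.mem_univ _
    · intro x _; exact Finset.mem_range.mpr (ZMod.val_lt x)
    · intro k hk; exact ZMod.val_cast_of_lt (Finset.mem_range.mp hk)
    · intro x _; exact ZMod.natCast_zmod_val x
    · intro k _; rfl
  rw [hrange, Finset.sum_insert (by simp)] at h1
  simpa [hb] using h1

lemma isPrimitive_of_prime' (p : ℕ) [Fact p.Prime] (χ : DirichletCharacter ℂ p) (hχ : χ ≠ 1) :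
    χ.IsPrimitive := by
  have hp : p.Prime := Fact.out
  rcases hp.eq_one_or_self_of_dvd _ (DirichletCharacter.conductor_dvd_level χ) with h | h
  · exact absurd ((DirichletCharacter.eq_one_iff_conductor_eq_one).mpr h) hχ
  · exact h

noncomputable def Eterm (p : ℕ) (n : ℤ) (k : ℕ) : ℂ :=
  Complex.exp (2 * Real.pi * Complex.I * (n : ℂ) * (((k : ℝ) / p : ℝ) : ℂ))

noncomputable def Gsum (p : ℕ) (χ : DirichletCharacter ℂ p) (n : ℤ) : ℂ :=
  ∑ k ∈ Finset.Icc 1 (p - 1), χ ((k : ℕ) : ZMod p) * Eterm p n k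

lemma abs_Eterm (p : ℕ) (n : ℤ) (k : ℕ) : ‖Eterm p n k‖ = 1 := by
  rw [Eterm, show (2 * (Real.pi : ℂ) * Complex.I * (n : ℂ) * (((k : ℝ) / p : ℝ) : ℂ))
      = ((2 * Real.pi * n * ((k : ℝ) / p) : ℝ) : ℂ) * Complex.I by push_cast; ring,
    Complex.norm_exp_ofReal_mul_I]

lemma Eterm_eq_stdAddChar (p : ℕ) [NeZero p] (n : ℤ) (k : ℕ) :
    Eterm p n k = ZMod.stdAddChar (((n * k : ℤ) : ZMod p)) := by
  rw [ZMod.stdAddChar_coe, Eterm]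
  congr 1
  push_cast
  ring

lemma Gsum_eq (p : ℕ) [NeZero p] [Nontrivial (ZMod p)] (χ : DirichletCharacter ℂ p)
    (hχprim : χ.IsPrimitive) (n : ℤ) :
    Gsum p χ n = χ⁻¹ ((n : ZMod p)) * gaussSum χ (ZMod.stdAddChar (N := p)) := by
  have step2 : Gsum p χ n = ∑ k ∈ Finset.Icc 1 (p - 1),
      (fun x : ZMod p => χ x * ZMod.stdAddChar ((n : ZMod p) * x)) ((k : ℕ) : ZMod p) := by
    rw [Gsum]
    refine Finset.sum_congr rfl fun k _ => ?_
    rw [Eterm_eq_stdAddChar]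
    show _ = χ _ * ZMod.stdAddChar ((n : ZMod p) * ((k : ℕ) : ZMod p))
    congr 2
    push_cast
    ring
  rw [step2, sum_Icc_eq_sum_zmod' p
    (fun x : ZMod p => χ x * ZMod.stdAddChar ((n : ZMod p) * x))
    (show χ 0 * _ = 0 by rw [χ.map_nonunit not_isUnit_zero, zero_mul])]
  have : ∑ x : ZMod p, χ x * ZMod.stdAddChar ((n : ZMod p) * x)
      = gaussSum χ ((ZMod.stdAddChar (N := p)).mulShift (n : ZMod p)) := by
    rw [gaussSum]
    exact Finset.sum_congr rfl fun x _ => by rw [AddChar.mulShift_apply]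
  rw [this, gaussSum_mulShift_of_isPrimitive _ hχprim]

lemma abs_Gsum_le (p : ℕ) [NeZero p] [Fact p.Prime] (χ : DirichletCharacter ℂ p)
    (hχ : χ ≠ 1) (n : ℤ) : ‖Gsum p χ n‖ ≤ Real.sqrt p := by
  rw [Gsum_eq p χ (isPrimitive_of_prime' p χ hχ) n, norm_mul, abs_gaussSum_eq' p χ hχ]
  calc ‖χ⁻¹ ((n : ZMod p))‖ * Real.sqrt p
      ≤ 1 * Real.sqrt p :=
        mul_le_mul_of_nonneg_right ((χ⁻¹).norm_le_one _) (Real.sqrt_nonneg _)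
    _ = Real.sqrt p := one_mul _

lemma Gsum_zero (p : ℕ) [NeZero p] [Nontrivial (ZMod p)] (χ : DirichletCharacter ℂ p)
    (hχprim : χ.IsPrimitive) : Gsum p χ 0 = 0 := by
  rw [Gsum_eq p χ hχprim 0]
  push_cast
  rw [(χ⁻¹).map_nonunit not_isUnit_zero, zero_mul]

set_option maxHeartbeats 1000000 in
theorem char_sum_fourier_bound (p : ℕ) (hp : p.Prime)
    (χ : DirichletCharacter ℂ p) (hχ : χ ≠ 1)
    (f : ℝ → ℝ) (a : ℤ → ℂ)
    (hf : ∀ x ∈ Set.Ioo (0 : ℝ) 1,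
      (f x : ℂ) = ∑' n : ℤ, a n * Complex.exp (2 * Real.pi * Complex.I * (n : ℂ) * (x : ℂ)))
    (hS : Summable fun n : {n : ℤ // n ≠ 0} => ‖a n‖) :
    ‖∑ k ∈ Finset.Icc 1 (p - 1), χ ((k : ℕ) : ZMod p) * (f ((k : ℝ) / p) : ℂ)‖
      ≤ (∑' n : {n : ℤ // n ≠ 0}, ‖a n‖) * Real.sqrt p := by
  haveI : Fact p.Prime := ⟨hp⟩
  haveI : NeZero p := ⟨hp.pos.ne'⟩
  have hSa : Summable fun n : ℤ => ‖a n‖ := by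
    rw [← Finset.summable_compl_iff ({0} : Finset ℤ)]
    exact ((Equiv.subtypeEquivRight (fun n => by simp)).summable_iff
      (f := fun n : {n : ℤ // n ≠ 0} => ‖a n‖)).mpr hS
  have hsum_n : ∀ k : ℕ, Summable (fun n : ℤ => a n * Eterm p n k) := by
    intro k
    apply Summable.of_norm
    have : (fun n : ℤ => ‖a n * Eterm p n k‖) = fun n : ℤ => ‖a n‖ := by
      funext n
      rw [norm_mul, abs_Eterm, mul_one]
    rw [this]; exact hSa
  have swap : ∑ k ∈ Finset.Icc 1 (p - 1), χ ((k : ℕ) : ZMod p) * (f ((k : ℝ) / p) : ℂ)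
      = ∑' n : ℤ, a n * Gsum p χ n := by
    have h2 : ∀ k ∈ Finset.Icc 1 (p - 1),
        χ ((k : ℕ) : ZMod p) * (f ((k : ℝ) / p) : ℂ)
          = ∑' n : ℤ, χ ((k : ℕ) : ZMod p) * (a n * Eterm p n k) := by
      intro k hk
      obtain ⟨hk1, hk2⟩ := Finset.mem_Icc.mp hk
      have hx : (k : ℝ) / p ∈ Set.Ioo (0 : ℝ) 1 := by
        constructor
        · have h1 : (0 : ℝ) < k := by exact_mod_cast hk1
          have h2 : (0 : ℝ) < p := by exact_mod_cast hp.pos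
          positivity
        · rw [div_lt_one (by exact_mod_cast hp.pos)]
          exact_mod_cast (show k < p by omega)
      rw [hf _ hx, ← tsum_mul_left]
      exact tsum_congr fun n => by rw [Eterm]
    rw [Finset.sum_congr rfl h2, ← Summable.tsum_finsetSum (fun k _ => (hsum_n k).mul_left _)]
    refine tsum_congr fun n => ?_
    rw [Gsum, Finset.mul_sum]
    exact Finset.sum_congr rfl fun k _ => by ring
  rw [swap]
  have hsupp : Function.support (fun n : ℤ => a n * Gsum p χ n) ⊆ {n : ℤ | n ≠ 0} := by
    intro n hn
    simp only [Set.mem_setOf_eq]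
    rintro rfl
    apply hn
    show a 0 * Gsum p χ 0 = 0
    rw [Gsum_zero p χ (isPrimitive_of_prime' p χ hχ), mul_zero]
  rw [← tsum_subtype_eq_of_support_subset hsupp,
    show (∑' n : ↑{n : ℤ | n ≠ 0}, a (n : ℤ) * Gsum p χ (n : ℤ))
      = ∑' n : {n : ℤ // n ≠ 0}, a (n : ℤ) * Gsum p χ (n : ℤ) from rfl]
  have hSb : Summable fun n : {n : ℤ // n ≠ 0} => ‖a n‖ * Real.sqrt p :=
    hS.mul_right _
  have hnorm_le : ∀ n : {n : ℤ // n ≠ 0},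
      ‖a (n : ℤ) * Gsum p χ (n : ℤ)‖ ≤ ‖a n‖ * Real.sqrt p := by
    intro n
    rw [norm_mul]
    exact mul_le_mul_of_nonneg_left (abs_Gsum_le p χ hχ n) (norm_nonneg _)
  have hsummable_sub : Summable (fun n : {n : ℤ // n ≠ 0} => ‖a (n : ℤ) * Gsum p χ (n : ℤ)‖) :=
    Summable.of_nonneg_of_le (fun _ => norm_nonneg _) hnorm_le hSb
  calc ‖∑' n : {n : ℤ // n ≠ 0}, a (n : ℤ) * Gsum p χ (n : ℤ)‖
      = ‖∑' n : {n : ℤ // n ≠ 0}, a (n : ℤ) * Gsum p χ (n : ℤ)‖ := rfl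
    _ ≤ ∑' n : {n : ℤ // n ≠ 0}, ‖a (n : ℤ) * Gsum p χ (n : ℤ)‖ := norm_tsum_le_tsum_norm hsummable_sub
    _ ≤ ∑' n : {n : ℤ // n ≠ 0}, ‖a n‖ * Real.sqrt p :=
        Summable.tsum_le_tsum hnorm_le hsummable_sub hSb
    _ = (∑' n : {n : ℤ // n ≠ 0}, ‖a n‖) * Real.sqrt p := tsum_mul_right
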